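/- arXiv:math/0204060 — 3 statements merged into one kernel-verified Lean document; each statement's English description precedes it below -/
import Mathlib

section
/- Let H be a Hilbert space, F a finite-dimensional subspace, and t ↦ T(t) ∈ L(H,H) a C^k curve of operators (k ≥ 1) such that every T(t) has rank N = dim F and T(0)(H) = F with T(0)T(0)(H) = T(0)(H). Then t ↦ Trace(T(t)) is C^k in a neighborhood of 0. -/
/-- If `t ↦ T(t)` is a `C^k` curve of rank-`N` operators on a Hilbert space with
`T(0)(H) = F` finite dimensional and `T(0)T(0)(H) = T(0)(H)`, then
`t ↦ Trace(T(t))` is `C^k` near `0`. -/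
theorem trace_of_Ck_finite_rank_curve
    {H : Type*} [NormedAddCommGroup H] [InnerProductSpace ℝ H] [CompleteSpace H]
    (k : ℕ) (hk : 1 ≤ k) (N : ℕ)
    (T : ℝ → H →L[ℝ] H) (hT : ContDiff ℝ k T)
    (F : Submodule ℝ H) [FiniteDimensional ℝ F]
    (hF : Module.finrank ℝ F = N)
    (hrank : ∀ t, Module.finrank ℝ (LinearMap.range ((T t : H →ₗ[ℝ] H))) = N)
    (hrange0 : LinearMap.range ((T 0 : H →ₗ[ℝ] H)) = F)
    (hT0F : Submodule.map ((T 0 : H →ₗ[ℝ] H)) F = F) :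
    ∃ ε > 0, ∃ τ : ℝ → ℝ,
      ContDiffOn ℝ k τ (Metric.ball (0 : ℝ) ε) ∧
      ∀ t ∈ Metric.ball (0 : ℝ) ε,
        ∀ (G : Submodule ℝ H) (_ : FiniteDimensional ℝ G) (hG : ∀ x, T t x ∈ G),
          τ t = LinearMap.trace ℝ G
            (((T t : H →ₗ[ℝ] H)).restrict (fun x _ => hG x)) := by
  classical
  haveI : CompleteSpace F := FiniteDimensional.complete ℝ F
  set P : H →L[ℝ] F := F.orthogonalProjectionOnto with hPdef
  set ι : F →L[ℝ] H := F.subtypeL with hιdef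
  set Q : ℝ → (F →L[ℝ] F) := fun t => P.comp ((T t).comp ι) with hQdef
  set A : ℝ → (F →L[ℝ] F) := fun t => P.comp ((T t).comp ((T t).comp ι)) with hAdef
  -- smoothness of `Q` and `A`
  have hQc : ContDiff ℝ k Q := contDiff_const.clm_comp (hT.clm_comp contDiff_const)
  have hAc : ContDiff ℝ k A :=
    contDiff_const.clm_comp (hT.clm_comp (hT.clm_comp contDiff_const))
  -- the trace as a continuous linear functional on `F →L[ℝ] F`
  haveI : FiniteDimensional ℝ (F →L[ℝ] F) :=
    LinearMap.toContinuousLinearMap.finiteDimensional (V := F →ₗ[ℝ] F)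
  set trL : (F →L[ℝ] F) →ₗ[ℝ] ℝ :=
    (LinearMap.trace ℝ F).comp (ContinuousLinearMap.coeLM ℝ) with htrLdef
  have htrLc : Continuous trL := trL.continuous_of_finiteDimensional
  -- `Q 0` is a unit
  have hQ0surj : Function.Surjective (Q 0) := by
    intro y
    obtain ⟨x, hxF, hxy⟩ : (y : H) ∈ Submodule.map ((T 0 : H →ₗ[ℝ] H)) F := by
      rw [hT0F]; exact y.2
    refine ⟨⟨x, hxF⟩, ?_⟩
    have h1 : Q 0 ⟨x, hxF⟩ = P (y : H) := congrArg P hxy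
    rw [h1, hPdef]
    exact Submodule.orthogonalProjectionOnto_mem_subspace_eq_self y
  have hQ0inj : Function.Injective ((Q 0 : F →ₗ[ℝ] F)) :=
    (LinearMap.injective_iff_surjective).mpr hQ0surj
  have hQ0 : IsUnit (Q 0) :=
    ContinuousLinearMap.isUnit_iff_bijective.mpr ⟨hQ0inj, hQ0surj⟩
  -- the candidate function
  set τ : ℝ → ℝ := fun t => trL ((A t).comp (Ring.inverse (Q t))) with hτdef
  -- `τ` is C^k near 0
  have hinv : ContDiffAt ℝ k (fun t => Ring.inverse (Q t)) 0 := by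
    have h1 : ContDiffAt ℝ k Ring.inverse (Q 0) := by
      have := contDiffAt_ringInverse ℝ (R := F →L[ℝ] F) (n := k) hQ0.unit
      rwa [hQ0.unit_spec] at this
    exact h1.comp 0 hQc.contDiffAt
  have hτat : ContDiffAt ℝ k τ 0 := by
    have h2 : ContDiffAt ℝ k (fun t => (A t).comp (Ring.inverse (Q t))) 0 :=
      hAc.contDiffAt.clm_comp hinv
    exact (trL.toContinuousLinearMap.contDiff.contDiffAt).comp 0 h2
  obtain ⟨u, hu, hτu⟩ := hτat.contDiffOn le_rfl (by simp)
  -- units are open, so `Q t` is a unit near 0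
  have h1 := Units.isOpen (R := (F →L[ℝ] F))
  have hUopen : IsOpen (Q ⁻¹' {g : F →L[ℝ] F | IsUnit g}) := h1.preimage hQc.continuous
  have hmem : u ∩ Q ⁻¹' {g : F →L[ℝ] F | IsUnit g} ∈ nhds (0 : ℝ) :=
    Filter.inter_mem hu (hUopen.mem_nhds hQ0)
  obtain ⟨ε, hε, hball⟩ := Metric.mem_nhds_iff.mp hmem
  refine ⟨ε, hε, τ, hτu.mono (fun t ht => (hball ht).1), ?_⟩
  intro t ht G hGfin hG
  have htunit : IsUnit (Q t) := (hball ht).2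
  set f : H →ₗ[ℝ] H := (T t : H →ₗ[ℝ] H) with hfdef
  set R : F →L[ℝ] F := Ring.inverse (Q t) with hRdef
  have hRQ : ∀ z : F, R (Q t z) = z := by
    intro z
    have h1 : R * Q t = 1 := Ring.inverse_mul_cancel _ htunit
    calc R (Q t z) = (R * Q t) z := rfl
    _ = z := by rw [h1]; rfl
  have hQR : ∀ z : F, Q t (R z) = z := by
    intro z
    have h1 : Q t * R = 1 := Ring.mul_inverse_cancel _ htunit
    calc Q t (R z) = (Q t * R) z := rfl
    _ = z := by rw [h1]; rfl
  -- range f = f '' F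
  have hrangele : LinearMap.range f ≤ G := by
    rintro _ ⟨x, rfl⟩; exact hG x
  haveI : FiniteDimensional ℝ (LinearMap.range f) :=
    Submodule.finiteDimensional_of_le hrangele
  have hinjF : Function.Injective (f ∘ₗ F.subtype) := by
    intro x y hxy
    have h1 : Q t x = Q t y := congrArg P hxy
    have h2 := congrArg R h1
    rwa [hRQ, hRQ] at h2
  have hmapeq : Submodule.map f F = LinearMap.range f := by
    have h1 : Submodule.map f F = LinearMap.range (f ∘ₗ F.subtype) := by
      rw [LinearMap.range_comp, Submodule.range_subtype]
    apply Submodule.eq_of_le_of_finrank_eq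
    · exact Submodule.map_le_iff_le_comap.mpr (fun x _ => ⟨x, rfl⟩)
    · rw [h1, LinearMap.finrank_range_of_inj hinjF, hF, hrank t]
  -- key identity
  have key : ∀ x : H, f x = f (ι (R (P (f x)))) := by
    intro x
    have hx : f x ∈ Submodule.map f F := by rw [hmapeq]; exact ⟨x, rfl⟩
    obtain ⟨v, hvF, hvx⟩ := hx
    have h1 : P (f x) = Q t ⟨v, hvF⟩ := congrArg P hvx.symm
    rw [h1, hRQ]
    exact hvx.symm
  -- factor the restriction through F
  set w : G →ₗ[ℝ] F := (P : H →ₗ[ℝ] F) ∘ₗ f ∘ₗ G.subtype with hwdef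
  set s : F →ₗ[ℝ] H := f ∘ₗ (ι : F →ₗ[ℝ] H) ∘ₗ (R : F →ₗ[ℝ] F) with hsdef
  have hsG : ∀ y : F, s y ∈ G := fun y => hG _
  set u' : F →ₗ[ℝ] G := s.codRestrict G hsG with hu'def
  have hrestrict : f.restrict (fun x _ => hG x) = u' ∘ₗ w := by
    ext g
    show f (g : H) = s (w g)
    exact key (g : H)
  have hwu : w ∘ₗ u' = (((A t).comp R : F →L[ℝ] F) : F →ₗ[ℝ] F) := by
    ext y
    rfl
  rw [hrestrict, LinearMap.trace_comp_comm', hwu]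
  rfl
end

section
/- If P and Q are idempotent bounded operators on a Hilbert space with ‖P − Q‖ < 1 and P has finite rank N, then Q has rank N. -/
/-- Key estimate: if `‖P - Q‖ < 1`, `P x = x` and `Q x = 0`, then `x = 0`. -/
lemma aux_near_zero {H : Type*} [NormedAddCommGroup H] [InnerProductSpace ℝ H]
    (P Q : H →L[ℝ] H) (hnear : ‖P - Q‖ < 1) {x : H}
    (hx : P x = x) (hqx : Q x = 0) : x = 0 := by
  by_contra h
  have h1 : ‖x‖ = ‖(P - Q) x‖ := by
    simp [ContinuousLinearMap.sub_apply, hx, hqx]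
  have h2 : ‖(P - Q) x‖ ≤ ‖P - Q‖ * ‖x‖ := (P - Q).le_opNorm x
  have h3 : 0 < ‖x‖ := norm_pos_iff.mpr h
  nlinarith

/-- Membership in range of an idempotent. -/
lemma aux_mem_range {H : Type*} [NormedAddCommGroup H] [InnerProductSpace ℝ H]
    (P : H →L[ℝ] H) (hP : P.comp P = P) {x : H} :
    x ∈ LinearMap.range ((P : H →ₗ[ℝ] H)) ↔ P x = x := by
  constructor
  · rintro ⟨y, rfl⟩
    have := ContinuousLinearMap.ext_iff.mp hP y
    simpa using this
  · intro h
    exact ⟨x, h⟩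

/-- If `P`, `Q` are idempotent bounded operators on a Hilbert space with
`‖P − Q‖ < 1` and `P` has finite rank `N`, then `Q` has rank `N`. -/
theorem rank_eq_of_idempotent_near
    {H : Type*} [NormedAddCommGroup H] [InnerProductSpace ℝ H] [CompleteSpace H]
    (P Q : H →L[ℝ] H)
    (hP : P.comp P = P) (hQ : Q.comp Q = Q)
    (hnear : ‖P - Q‖ < 1) (N : ℕ)
    (hPfin : FiniteDimensional ℝ (LinearMap.range ((P : H →ₗ[ℝ] H))))
    (hPrank : Module.finrank ℝ (LinearMap.range ((P : H →ₗ[ℝ] H))) = N) :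
    FiniteDimensional ℝ (LinearMap.range ((Q : H →ₗ[ℝ] H))) ∧
      Module.finrank ℝ (LinearMap.range ((Q : H →ₗ[ℝ] H))) = N := by
  have hnear' : ‖Q - P‖ < 1 := by rwa [norm_sub_rev]
  -- restriction of P to range Q, landing in range P
  have hmapP : ∀ x ∈ LinearMap.range ((Q : H →ₗ[ℝ] H)),
      (P : H →ₗ[ℝ] H) x ∈ LinearMap.range ((P : H →ₗ[ℝ] H)) := fun x _ => ⟨x, rfl⟩
  have hmapQ : ∀ x ∈ LinearMap.range ((P : H →ₗ[ℝ] H)),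
      (Q : H →ₗ[ℝ] H) x ∈ LinearMap.range ((Q : H →ₗ[ℝ] H)) := fun x _ => ⟨x, rfl⟩
  set f := ((P : H →ₗ[ℝ] H)).restrict hmapP
  set g := ((Q : H →ₗ[ℝ] H)).restrict hmapQ
  have hf : Function.Injective f := by
    rw [← LinearMap.ker_eq_bot, LinearMap.ker_eq_bot']
    rintro ⟨x, hx⟩ hfx
    have hx' : Q x = x := (aux_mem_range Q hQ).mp hx
    have hpx : P x = 0 := by
      have := congrArg Subtype.val hfx
      simpa [f, LinearMap.restrict_apply] using this
    have : x = 0 := aux_near_zero Q P hnear' hx' hpx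
    simpa using this
  have hg : Function.Injective g := by
    rw [← LinearMap.ker_eq_bot, LinearMap.ker_eq_bot']
    rintro ⟨x, hx⟩ hgx
    have hx' : P x = x := (aux_mem_range P hP).mp hx
    have hqx : Q x = 0 := by
      have := congrArg Subtype.val hgx
      simpa [g, LinearMap.restrict_apply] using this
    have : x = 0 := aux_near_zero P Q hnear hx' hqx
    simpa using this
  have hQfin : FiniteDimensional ℝ (LinearMap.range ((Q : H →ₗ[ℝ] H))) :=
    FiniteDimensional.of_injective f hf
  refine ⟨hQfin, le_antisymm ?_ ?_⟩
  · calc Module.finrank ℝ (LinearMap.range ((Q : H →ₗ[ℝ] H)))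
        ≤ Module.finrank ℝ (LinearMap.range ((P : H →ₗ[ℝ] H))) :=
          LinearMap.finrank_le_finrank_of_injective hf
      _ = N := hPrank
  · calc N = Module.finrank ℝ (LinearMap.range ((P : H →ₗ[ℝ] H))) := hPrank.symm
      _ ≤ Module.finrank ℝ (LinearMap.range ((Q : H →ₗ[ℝ] H))) :=
          LinearMap.finrank_le_finrank_of_injective hg
end

section
/- Let s_n = 2^{n−n²} and define λ_n(t) = 2^{−n²}√(1 + (t/s_n)²). Then for every α > 0, the sequence (λ_n'(s_n) − λ_n'(0))/s_n^α = 2^{n(α(n−1)−1)}/√2 tends to infinity as n → ∞. -/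
/-- With `s_n = 2^{n-n²}` and `λ_n'(t) = 2^{n²-2n} t / √(1 + (t/s_n)²)`, for every
`α > 0` the difference quotient `(λ_n'(s_n) − λ_n'(0))/s_n^α` equals
`2^{n(α(n-1)-1)}/√2` and tends to infinity as `n → ∞`. -/
theorem example_not_C1alpha (α : ℝ) (hα : 0 < α) :
    let s : ℕ → ℝ := fun n => (2:ℝ) ^ ((n:ℤ) - (n:ℤ)^2)
    let lam' : ℕ → ℝ → ℝ := fun n t =>
      (2:ℝ) ^ ((n:ℤ)^2 - 2*(n:ℤ)) * t / Real.sqrt (1 + (t / s n)^2)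
    let q : ℕ → ℝ := fun n => (lam' n (s n) - lam' n 0) / (s n) ^ α
    (∀ n : ℕ, q n = (2:ℝ) ^ ((n:ℝ) * (α * ((n:ℝ) - 1) - 1)) / Real.sqrt 2) ∧
      Filter.Tendsto q Filter.atTop Filter.atTop := by
  intro s lam' q
  have h2 : (0:ℝ) < 2 := by norm_num
  have hq : ∀ n : ℕ, q n = (2:ℝ) ^ ((n:ℝ) * (α * ((n:ℝ) - 1) - 1)) / Real.sqrt 2 := by
    intro n
    have hsn : s n = (2:ℝ) ^ ((n:ℝ) - (n:ℝ)^2) := by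
      show (2:ℝ) ^ ((n:ℤ) - (n:ℤ)^2) = _
      rw [← Real.rpow_intCast]
      push_cast
      ring_nf
    have hsnpos : 0 < s n := by rw [hsn]; positivity
    have h0 : lam' n 0 = 0 := by simp [lam']
    have h1 : lam' n (s n) = (2:ℝ) ^ (((n:ℤ)^2 - 2*(n:ℤ) : ℤ) : ℝ) * s n / Real.sqrt 2 := by
      show (2:ℝ) ^ ((n:ℤ)^2 - 2*(n:ℤ)) * s n / Real.sqrt (1 + (s n / s n)^2) = _
      rw [div_self hsnpos.ne', ← Real.rpow_intCast]
      norm_num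
    show (lam' n (s n) - lam' n 0) / (s n) ^ α = _
    rw [h0, sub_zero, h1, hsn, ← Real.rpow_mul h2.le, ← Real.rpow_add h2,
      div_right_comm, ← Real.rpow_sub h2]
    congr 1
    push_cast
    ring
  refine ⟨hq, ?_⟩
  have he : Filter.Tendsto (fun n : ℕ => (n:ℝ) * (α * ((n:ℝ) - 1) - 1))
      Filter.atTop Filter.atTop := by
    have hcast : Filter.Tendsto (fun n : ℕ => (n:ℝ)) Filter.atTop Filter.atTop :=
      tendsto_natCast_atTop_atTop
    have hmul : Filter.Tendsto (fun n : ℕ => α * (n:ℝ)) Filter.atTop Filter.atTop :=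
      hcast.const_mul_atTop hα
    have h1 : Filter.Tendsto (fun n : ℕ => α * ((n:ℝ) - 1) - 1) Filter.atTop Filter.atTop :=
      (Filter.tendsto_atTop_add_const_right Filter.atTop (-(α + 1)) hmul).congr
        (fun n => by ring)
    refine Filter.tendsto_atTop_mono' Filter.atTop ?_ hcast
    filter_upwards [h1.eventually_ge_atTop 1] with n hn
    exact le_mul_of_one_le_right (Nat.cast_nonneg n) hn
  have hlog : (0:ℝ) < Real.log 2 := Real.log_pos (by norm_num)
  have hbase : Filter.Tendsto (fun n : ℕ => (2:ℝ) ^ ((n:ℝ) * (α * ((n:ℝ) - 1) - 1)))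
      Filter.atTop Filter.atTop := by
    refine (Real.tendsto_exp_atTop.comp (he.atTop_mul_const hlog)).congr fun n => ?_
    simp [Real.rpow_def_of_pos h2, mul_comm]
  have := hbase.atTop_div_const (r := Real.sqrt 2) (by positivity)
  exact this.congr fun n => (hq n).symm
end
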